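/- Assume f_b has two distinct roots x_{b1} < x_{b2} and there exists ã* ∈ (x_{b1}, x_{b2}) with F(ã*)·e^{ã*} = F'(ã*)·(e^{ã*} + c_b). Then for every x ∈ [ã*, x_{b2}) there exists a unique β(x) > x_s such that q_F(x, β(x)) = 0; the function β is strictly decreasing on [ã*, x_{b2}); and β(ã*) = b*. -/

import Mathlib

open Real MeasureTheory Set Filter

open Metric Asymptotics Topology

namespace Stmt18Aux

/-- kernel integrand -/
noncomputable def ker (a c u : ℝ) : ℝ := u ^ a * Real.exp (c * u - u ^ 2 / 2)

lemma ker_contOn (a c : ℝ) : ContinuousOn (ker a c) (Ioi 0) := by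
  apply ContinuousOn.mul
  · intro u hu
    exact (Real.continuousAt_rpow_const u a (Or.inl (ne_of_gt hu))).continuousWithinAt
  · exact (Real.continuous_exp.comp (by continuity)).continuousOn

lemma ker_pos {a c u : ℝ} (hu : 0 < u) : 0 < ker a c u :=
  mul_pos (Real.rpow_pos_of_pos hu a) (Real.exp_pos _)

lemma ker_meas (a c : ℝ) : AEStronglyMeasurable (ker a c) (volume.restrict (Ioi 0)) :=
  (ker_contOn a c).aestronglyMeasurable measurableSet_Ioi

lemma ker_le {a c u : ℝ} (hu : 0 < u) :
    ker a c u ≤ Real.exp (c ^ 2) * (u ^ a * Real.exp (-(1/4 : ℝ) * u ^ 2)) := by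
  rw [ker, mul_comm (Real.exp (c^2)) _, mul_assoc]
  apply mul_le_mul_of_nonneg_left _ (Real.rpow_nonneg hu.le a)
  rw [← Real.exp_add]
  apply Real.exp_le_exp.2
  nlinarith [sq_nonneg (u / 2 - c)]

lemma ker_int (a c : ℝ) (ha : -1 < a) : IntegrableOn (ker a c) (Ioi 0) := by
  apply Integrable.mono' ((integrableOn_rpow_mul_exp_neg_mul_sq (by norm_num : (0:ℝ) < 1/4)
    ha).const_mul (Real.exp (c ^ 2))) (ker_meas a c)
  filter_upwards [ae_restrict_mem measurableSet_Ioi] with u hu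
  rw [Real.norm_eq_abs, abs_of_pos (ker_pos hu)]
  exact ker_le hu

/-- kernel integral -/
noncomputable def K (a c : ℝ) : ℝ := ∫ u in Ioi (0:ℝ), ker a c u

lemma K_pos (a c : ℝ) (ha : -1 < a) : 0 < K a c := by
  rw [K, setIntegral_pos_iff_support_of_nonneg_ae]
  · apply lt_of_lt_of_le _ (measure_mono (show Ioo 0 1 ⊆ Function.support (ker a c) ∩ Ioi 0 from
      fun u hu => ⟨ne_of_gt (ker_pos hu.1), hu.1⟩))
    simp [Real.volume_Ioo]
  · filter_upwards [ae_restrict_mem measurableSet_Ioi] with u hu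
    exact (ker_pos hu).le
  · exact ker_int a c ha

lemma K_hasDeriv (a : ℝ) (ha : -1 < a) (c : ℝ) :
    HasDerivAt (fun c' => K a c') (K (a+1) c) c := by
  have key := hasDerivAt_integral_of_dominated_loc_of_deriv_le (μ := volume.restrict (Ioi 0))
    (F := fun c' u => ker a c' u) (F' := fun c' u => ker (a+1) c' u) (x₀ := c)
    (bound := ker (a+1) (|c|+1)) (ball_mem_nhds c zero_lt_one)
    (Filter.Eventually.of_forall (fun c' => ker_meas a c'))
    (ker_int a c ha) (ker_meas (a+1) c) ?_ (ker_int (a+1) (|c|+1) (by linarith)) ?_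
  · exact key.2
  · filter_upwards [ae_restrict_mem measurableSet_Ioi] with u hu
    intro x hx
    rw [Real.norm_eq_abs, abs_of_pos (ker_pos hu)]
    unfold ker
    apply mul_le_mul_of_nonneg_left _ (Real.rpow_nonneg hu.le _)
    apply Real.exp_le_exp.2
    have : x ≤ |c| + 1 := by
      have := abs_lt.1 (mem_ball_iff_norm.1 hx)
      cases abs_cases c <;> linarith [this.2]
    nlinarith [mem_Ioi.1 hu]
  · filter_upwards [ae_restrict_mem measurableSet_Ioi] with u hu
    intro x _
    have hu0 : (0:ℝ) < u := hu
    have h1 : HasDerivAt (fun c' : ℝ => c' * u - u ^ 2 / 2) u x := by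
      simpa using ((hasDerivAt_id x).mul_const u).sub_const (u ^ 2 / 2)
    have h2 : HasDerivAt (fun c' : ℝ => Real.exp (c' * u - u ^ 2 / 2))
        (Real.exp (x * u - u ^ 2 / 2) * u) x := by
      simpa [mul_comm, Function.comp_def] using (Real.hasDerivAt_exp _).comp x h1
    have h3 : HasDerivAt (fun c' : ℝ => ker a c' u)
        (u ^ a * (Real.exp (x * u - u ^ 2 / 2) * u)) x := by
      unfold ker
      exact h2.const_mul _
    refine h3.congr_deriv (Eq.symm ?_)
    unfold ker
    rw [Real.rpow_add_one (ne_of_gt hu0)]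
    ring

lemma K_rec (a c : ℝ) (ha : 0 < a) : K (a+1) c = a * K (a-1) c + c * K a c := by
  set g : ℝ → ℝ := fun u => u ^ a * Real.exp (c * u - u ^ 2 / 2) with hg
  set g' : ℝ → ℝ := fun u => a * ker (a-1) c u + c * ker a c u - ker (a+1) c u with hg'
  have hderiv : ∀ u ∈ Ioi (0:ℝ), HasDerivAt g (g' u) u := by
    intro u hu
    have hu0 : (0:ℝ) < u := hu
    have h1 : HasDerivAt (fun u : ℝ => u ^ a) (a * u ^ (a-1)) u :=
      Real.hasDerivAt_rpow_const (Or.inl (ne_of_gt hu0))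
    have h2 : HasDerivAt (fun u : ℝ => c * u - u ^ 2 / 2) (c - u) u := by
      have := ((hasDerivAt_id u).const_mul c).sub ((hasDerivAt_pow 2 u).div_const 2)
      exact this.congr_deriv (by norm_num)
    have h3 : HasDerivAt (fun u : ℝ => Real.exp (c * u - u ^ 2 / 2))
        (Real.exp (c * u - u ^ 2 / 2) * (c - u)) u := by
      simpa [mul_comm, Function.comp_def] using (Real.hasDerivAt_exp _).comp u h2
    have h4 := h1.mul h3
    refine h4.congr_deriv (Eq.symm ?_)
    simp only [hg', ker]
    rw [Real.rpow_add_one (ne_of_gt hu0)]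
    ring
  have hint : IntegrableOn g' (Ioi 0) :=
    (((ker_int (a-1) c (by linarith)).const_mul a).add
      ((ker_int a c (by linarith)).const_mul c)).sub (ker_int (a+1) c (by linarith))
  have hcont : ContinuousWithinAt g (Ici 0) 0 := by
    apply ContinuousAt.continuousWithinAt
    apply ContinuousAt.mul
    · exact Real.continuousAt_rpow_const 0 a (Or.inr ha.le)
    · exact (Real.continuous_exp.comp (by continuity)).continuousAt
  have htop : Tendsto g atTop (𝓝 0) := by
    have hexp : Tendsto (fun u : ℝ => Real.exp (-(1/2) * u)) atTop (𝓝 0) := by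
      apply Real.tendsto_exp_atBot.comp
      exact Tendsto.const_mul_atTop_of_neg (by norm_num : -(1/2 : ℝ) < 0) tendsto_id
    have hsq : Tendsto (fun u : ℝ => u ^ a * Real.exp (-(1/4 : ℝ) * u ^ 2)) atTop (𝓝 0) :=
      (rpow_mul_exp_neg_mul_sq_isLittleO_exp_neg (by norm_num : (0:ℝ) < 1/4) a).trans_tendsto hexp
    apply squeeze_zero_norm' (a := fun u => Real.exp (c ^ 2) * (u ^ a * Real.exp (-(1/4 : ℝ) * u ^ 2)))
    · filter_upwards [eventually_gt_atTop (0:ℝ)] with u hu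
      rw [Real.norm_eq_abs, show g u = ker a c u from rfl, abs_of_pos (ker_pos hu)]
      exact ker_le hu
    · rw [show (0:ℝ) = Real.exp (c^2) * 0 by ring]
      exact hsq.const_mul _
  have heq := integral_Ioi_of_hasDerivAt_of_tendsto hcont hderiv hint htop
  have hg0 : g 0 = 0 := by
    simp [hg, Real.zero_rpow (ne_of_gt ha)]
  rw [hg0, sub_zero] at heq
  have h0 : ∫ u in Ioi (0:ℝ), g' u = 0 := heq
  have hA : IntegrableOn (fun u => a * ker (a - 1) c u) (Ioi 0) := by
    exact (ker_int (a-1) c (by linarith)).const_mul a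
  have hB : IntegrableOn (fun u => c * ker a c u) (Ioi 0) := by
    exact (ker_int a c (by linarith)).const_mul c
  have hAB : IntegrableOn (fun u => a * ker (a - 1) c u + c * ker a c u) (Ioi 0) := by
    exact hA.add hB
  have hC : IntegrableOn (fun u => ker (a+1) c u) (Ioi 0) := ker_int (a+1) c (by linarith)
  rw [hg'] at h0
  rw [integral_sub hAB hC, integral_add hA hB, integral_const_mul, integral_const_mul] at h0
  unfold K
  linarith [h0]

lemma K_mono (a : ℝ) (ha : -1 < a) {c c' : ℝ} (h : c ≤ c') : K a c ≤ K a c' := by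
  apply setIntegral_mono_on (ker_int a c ha) (ker_int a c' ha) measurableSet_Ioi
  intro u hu
  exact mul_le_mul_of_nonneg_left (Real.exp_le_exp.2 (by nlinarith [mem_Ioi.1 hu]))
    (Real.rpow_nonneg (le_of_lt hu) a)

/-- Gaussian-dominated integrability on ℝ. -/
lemma int_exp_gauss {b : ℝ} (hb : 0 < b) (θ α : ℝ) :
    Integrable (fun s : ℝ => Real.exp (α * s) * Real.exp (-b * (s - θ) ^ 2)) := by
  have hhalf : 0 < b / 2 := by linarith
  have hint : Integrable (fun s : ℝ => Real.exp (α * θ + α ^ 2 / (2 * b)) *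
      Real.exp (-(b/2) * (s - θ) ^ 2)) := by
    exact ((integrable_exp_neg_mul_sq hhalf).comp_sub_right θ).const_mul _
  apply hint.mono'
  · exact ((Real.continuous_exp.comp (by continuity)).mul
      (Real.continuous_exp.comp (by continuity))).aestronglyMeasurable
  · filter_upwards with s
    rw [Real.norm_eq_abs, abs_of_pos (mul_pos (Real.exp_pos _) (Real.exp_pos _)),
      ← Real.exp_add, ← Real.exp_add]
    apply Real.exp_le_exp.2
    have h1 : 2*b*(α*(s-θ)) ≤ α^2 + b^2*(s-θ)^2 := by nlinarith [sq_nonneg (b*(s-θ) - α)]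
    have h2 : α*(s-θ) ≤ α^2/(2*b) + (b/2)*(s-θ)^2 := by
      rw [show α*(s-θ) = (2*b*(α*(s-θ)))/(2*b) by field_simp]
      calc (2*b*(α*(s-θ)))/(2*b) ≤ (α^2 + b^2*(s-θ)^2)/(2*b) := by
            apply div_le_div_of_nonneg_right h1 (by linarith)
        _ = α^2/(2*b) + (b/2)*(s-θ)^2 := by field_simp
    nlinarith [h2]

lemma abs_sub_le_abs_add_abs (a c : ℝ) : |a - c| ≤ |a| + |c| := by
  rw [sub_eq_add_neg]
  exact (abs_add_le _ _).trans (by rw [abs_neg])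

lemma abs_poly_exp_bound (A m d s : ℝ) (hm : 0 ≤ m) :
    |A - m*s + d*Real.exp (-s)| * Real.exp s
      ≤ |A| *Real.exp s + m*Real.exp (2*s) + (m + |d|) := by
  have he : Real.exp (-s) * Real.exp s = 1 := by
    rw [← Real.exp_add]; simp
  have habs : |A - m*s + d*Real.exp (-s)| ≤ |A| + m*|s| + |d| *Real.exp (-s) := by
    calc |A - m*s + d*Real.exp (-s)| ≤ |A - m*s| + |d*Real.exp (-s)| := abs_add_le _ _
      _ ≤ (|A| + |m*s|) + |d| *Real.exp (-s) := by
          rw [abs_mul, abs_of_pos (Real.exp_pos _)]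
          exact add_le_add_left (abs_sub_le_abs_add_abs _ _) _
      _ = |A| + m*|s| + |d| *Real.exp (-s) := by rw [abs_mul, abs_of_nonneg hm]
  have hs : |s| ≤ Real.exp s + Real.exp (-s) := by
    rcases le_or_gt 0 s with h | h
    · rw [abs_of_nonneg h]
      have := Real.add_one_le_exp s
      linarith [Real.exp_pos (-s)]
    · rw [abs_of_neg h]
      have := Real.add_one_le_exp (-s)
      linarith [Real.exp_pos s]
  have h2 : Real.exp s * Real.exp s = Real.exp (2*s) := by
    rw [← Real.exp_add]; ring_nf
  have h3 : |s| * Real.exp s ≤ Real.exp (2*s) + 1 := by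
    calc |s| * Real.exp s ≤ (Real.exp s + Real.exp (-s)) * Real.exp s :=
          mul_le_mul_of_nonneg_right hs (Real.exp_pos s).le
      _ = Real.exp (2*s) + 1 := by rw [add_mul, h2, he]
  calc |A - m*s + d*Real.exp (-s)| * Real.exp s
      ≤ (|A| + m*|s| + |d| *Real.exp (-s)) * Real.exp s :=
        mul_le_mul_of_nonneg_right habs (Real.exp_pos s).le
    _ = |A| *Real.exp s + m*(|s| *Real.exp s) + |d| := by
        rw [add_mul, add_mul, mul_assoc, mul_assoc, he, mul_one]
    _ ≤ |A| *Real.exp s + m*Real.exp (2*s) + (m + |d|) := by nlinarith [h3]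

end Stmt18Aux

open Stmt18Aux

set_option maxHeartbeats 1000000 in
/-- If f_b has two distinct roots x_{b1} < x_{b2} and
ã* ∈ (x_{b1}, x_{b2}) satisfies F(ã*)e^{ã*} = F'(ã*)(e^{ã*} + c_b), then for every
x ∈ [ã*, x_{b2}) there is a unique β(x) > x_s with q_F(x, β(x)) = 0; β is strictly
decreasing on [ã*, x_{b2}); and β(ã*) = b*. -/
theorem stmt18
    (μ σ θ r c_s c_b : ℝ)
    (hμ : 0 < μ) (hσ : 0 < σ) (hr : 0 < r) (hcs : 0 < c_s) (hcb : 0 < c_b)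
    (F G : ℝ → ℝ)
    (hF : ∀ x : ℝ, F x = ∫ u in Ioi (0:ℝ),
        u ^ (r / μ - 1) * Real.exp (Real.sqrt (2 * μ / σ ^ 2) * (x - θ) * u - u ^ 2 / 2))
    (hG : ∀ x : ℝ, G x = ∫ u in Ioi (0:ℝ),
        u ^ (r / μ - 1) * Real.exp (Real.sqrt (2 * μ / σ ^ 2) * (θ - x) * u - u ^ 2 / 2))
    (f_s : ℝ → ℝ)
    (hfs : ∀ x : ℝ, f_s x = (μ * θ + σ ^ 2 / 2 - r) - μ * x + r * c_s * Real.exp (-x))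
    (x_s : ℝ) (hxs : f_s x_s = 0) (hxs_uniq : ∀ y, f_s y = 0 → y = x_s)
    (f_b : ℝ → ℝ)
    (hfb : ∀ x : ℝ, f_b x = (μ * θ + σ ^ 2 / 2 - r) - μ * x - r * c_b * Real.exp (-x))
    (bstar : ℝ)
    (hb : Real.exp bstar * F bstar = (Real.exp bstar - c_s) * deriv F bstar)
    (hb_uniq : ∀ b', Real.exp b' * F b' = (Real.exp b' - c_s) * deriv F b' → b' = bstar)
    (W Ψ : ℝ → ℝ)
    (hW : ∀ x, W x = deriv F x * G x - F x * deriv G x)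
    (hWpos : ∀ x, 0 < W x)
    (hΨ : ∀ x, Ψ x = 2 * F x / (σ ^ 2 * W x))
    (q_F : ℝ → ℝ → ℝ)
    (hqF : ∀ x z : ℝ, q_F x z =
      (∫ s in Iic x, Ψ s * Real.exp s * f_b s) - ∫ s in Iic z, Ψ s * Real.exp s * f_s s)
    (xb1 xb2 : ℝ) (hlt : xb1 < xb2) (hroot1 : f_b xb1 = 0) (hroot2 : f_b xb2 = 0)
    (astar : ℝ) (hastar : astar ∈ Ioo xb1 xb2)
    (hastar_eq : F astar * Real.exp astar = deriv F astar * (Real.exp astar + c_b)) :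
    ∃ β : ℝ → ℝ,
      (∀ x ∈ Ico astar xb2, x_s < β x ∧ q_F x (β x) = 0 ∧
        ∀ z : ℝ, x_s < z → q_F x z = 0 → z = β x) ∧
      StrictAntiOn β (Ico astar xb2) ∧
      β astar = bstar := by
  -- basic constants
  set ν : ℝ := r / μ with hνdef
  set k : ℝ := Real.sqrt (2 * μ / σ ^ 2) with hkdef
  have hσ2 : (0:ℝ) < σ ^ 2 := by positivity
  have hν : 0 < ν := div_pos hr hμ
  have hν1 : (-1:ℝ) < ν - 1 := by linarith
  have hk : 0 < k := Real.sqrt_pos.2 (by positivity)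
  have hk2 : k ^ 2 = 2 * μ / σ ^ 2 := Real.sq_sqrt (by positivity)
  set A₀ : ℝ := μ * θ + σ ^ 2 / 2 - r with hA₀
  -- explicit versions of F, G and their derivatives
  set FF : ℝ → ℝ := fun x => K (ν-1) (k*(x-θ)) with hFFdef
  set FF' : ℝ → ℝ := fun x => k * K ν (k*(x-θ)) with hFF'def
  set FF'' : ℝ → ℝ := fun x => k^2 * K (ν+1) (k*(x-θ)) with hFF''def
  set GG : ℝ → ℝ := fun x => K (ν-1) (k*(θ-x)) with hGGdef
  set GG' : ℝ → ℝ := fun x => -(k * K ν (k*(θ-x))) with hGG'def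
  have hFeq : F = FF := by
    funext x
    rw [hF x]
    rfl
  have hGeq : G = GG := by
    funext x
    rw [hG x]
    rfl
  have hlinF : ∀ x : ℝ, HasDerivAt (fun y : ℝ => k*(y-θ)) k x := by
    intro x
    simpa using ((hasDerivAt_id x).sub_const θ).const_mul k
  have hlinG : ∀ x : ℝ, HasDerivAt (fun y : ℝ => k*(θ-y)) (-k) x := by
    intro x
    simpa using ((hasDerivAt_id x).const_sub θ).const_mul k
  have hFder : ∀ x, HasDerivAt FF (FF' x) x := by
    intro x
    have h := (K_hasDeriv (ν-1) hν1 (k*(x-θ))).comp x (hlinF x)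
    refine h.congr_deriv (Eq.symm ?_)
    rw [show ν-1+1 = ν by ring]
    ring
  have hF'der : ∀ x, HasDerivAt FF' (FF'' x) x := by
    intro x
    have h := ((K_hasDeriv ν (by linarith) (k*(x-θ))).comp x (hlinF x)).const_mul k
    refine h.congr_deriv (Eq.symm ?_)
    show k^2 * K (ν+1) (k*(x-θ)) = k * (K (ν + 1) (k * (x - θ)) * k)
    ring
  have hGder : ∀ x, HasDerivAt GG (GG' x) x := by
    intro x
    have h := (K_hasDeriv (ν-1) hν1 (k*(θ-x))).comp x (hlinG x)
    refine h.congr_deriv (Eq.symm ?_)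
    rw [show ν-1+1 = ν by ring]
    ring
  set GG'' : ℝ → ℝ := fun x => k^2 * K (ν+1) (k*(θ-x)) with hGG''def
  have hG'der : ∀ x, HasDerivAt GG' (GG'' x) x := by
    intro x
    have h := (((K_hasDeriv ν (by linarith) (k*(θ-x))).comp x (hlinG x)).const_mul k).neg
    refine h.congr_deriv (Eq.symm ?_)
    show k^2 * K (ν+1) (k*(θ-x)) = -(k * (K (ν + 1) (k * (θ - x)) * -k))
    ring
  have hdF : deriv F = FF' := by
    rw [hFeq]; funext x; exact (hFder x).deriv
  have hdG : deriv G = GG' := by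
    rw [hGeq]; funext x; exact (hGder x).deriv
  have hFpos : ∀ x, 0 < FF x := fun x => K_pos _ _ hν1
  have hF'pos : ∀ x, 0 < FF' x := fun x => mul_pos hk (K_pos _ _ (by linarith))
  have hFmono : Monotone FF := by
    apply StrictMono.monotone
    apply strictMono_of_deriv_pos
    intro x
    rw [(hFder x).deriv]
    exact hF'pos x
  have hF'mono : Monotone FF' := by
    apply StrictMono.monotone
    apply strictMono_of_deriv_pos
    intro x
    rw [(hF'der x).deriv]
    exact mul_pos (by positivity) (K_pos _ _ (by linarith))
  -- ODE for FF
  have hODE : ∀ x, FF'' x = (2*r/σ^2) * FF x + (2*μ/σ^2) * (x - θ) * FF' x := by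
    intro x
    show k^2 * K (ν+1) (k*(x-θ)) = (2*r/σ^2) * K (ν-1) (k*(x-θ)) + (2*μ/σ^2) * (x - θ) * (k * K ν (k*(x-θ)))
    rw [K_rec ν (k*(x-θ)) hν, hk2, hνdef]
    field_simp
  have hGODE : ∀ x, GG'' x = (2*r/σ^2) * GG x + (2*μ/σ^2) * (x - θ) * GG' x := by
    intro x
    show k^2 * K (ν+1) (k*(θ-x)) = (2*r/σ^2) * K (ν-1) (k*(θ-x)) + (2*μ/σ^2) * (x - θ) * (-(k * K ν (k*(θ-x))))
    rw [K_rec ν (k*(θ-x)) hν, hk2, hνdef]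
    field_simp
    ring
  -- Wronskian: explicit form and derivative
  have hWeq : ∀ x, W x = FF' x * GG x - FF x * GG' x := by
    intro x; rw [hW x, hdF, hdG, hFeq, hGeq]
  have hWfun : W = fun y => FF' y * GG y - FF y * GG' y := funext hWeq
  have hWder : ∀ x, HasDerivAt W ((2*μ/σ^2) * (x - θ) * W x) x := by
    intro x
    rw [hWfun]
    have hd := ((hF'der x).mul (hGder x)).sub ((hFder x).mul (hG'der x))
    refine hd.congr_deriv (Eq.symm ?_)
    simp only
    rw [hODE x, hGODE x]
    ring
  set b : ℝ := μ / σ ^ 2 with hbdef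
  have hbpos : 0 < b := by positivity
  have hVder : ∀ y, HasDerivAt (fun y => W y * Real.exp (-b*(y-θ)^2)) 0 y := by
    intro y
    have h1 : HasDerivAt (fun y : ℝ => -b*(y-θ)^2) (-b*(2*(y-θ))) y := by
      have := (((hasDerivAt_id y).sub_const θ).pow 2).const_mul (-b)
      simpa using this
    have h2 := (Real.hasDerivAt_exp _).comp y h1
    have h3 := (hWder y).mul h2
    refine h3.congr_deriv (Eq.symm ?_)
    simp only [Function.comp_apply]
    rw [hbdef]
    field_simp
    ring
  have hWform : ∀ x, W x = W θ * Real.exp (b * (x - θ)^2) := by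
    intro x
    have h := is_const_of_deriv_eq_zero (𝕜 := ℝ) (f := fun y => W y * Real.exp (-b*(y-θ)^2))
      (fun y => (hVder y).differentiableAt) (fun y => (hVder y).deriv) x θ
    have hθ : W θ * Real.exp (-b*((θ:ℝ)-θ)^2) = W θ := by simp
    rw [hθ] at h
    calc W x = (W x * Real.exp (-b*(x-θ)^2)) * Real.exp (b*(x-θ)^2) := by
          rw [mul_assoc, ← Real.exp_add]; simp
      _ = W θ * Real.exp (b*(x-θ)^2) := by rw [h]
  have hWθ : 0 < W θ := hWpos θ
  set c₀ : ℝ := 2 / (σ ^ 2 * W θ) with hc₀def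
  have hc₀ : 0 < c₀ := by positivity
  have hΨeq : ∀ x, Ψ x = c₀ * FF x * Real.exp (-b * (x - θ)^2) := by
    intro x
    rw [hΨ x, hFeq, hWform x, hc₀def, neg_mul, Real.exp_neg]
    field_simp
  have hΨpos : ∀ x, 0 < Ψ x := by
    intro x
    rw [hΨeq x]
    exact mul_pos (mul_pos hc₀ (hFpos x)) (Real.exp_pos _)
  -- the R functions and the fundamental integral identity
  set R : ℝ → ℝ → ℝ := fun c z => (FF z * Real.exp z - FF' z * (Real.exp z - c)) / W z with hRdef
  have hRderiv : ∀ (c : ℝ) (z : ℝ), HasDerivAt (R c)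
      (Ψ z * Real.exp z * (A₀ - μ * z + r * c * Real.exp (-z))) z := by
    intro c z
    have hWz := hWpos z
    have hNder : HasDerivAt (fun y => FF y * Real.exp y - FF' y * (Real.exp y - c))
        (FF' z * Real.exp z + FF z * Real.exp z
          - (FF'' z * (Real.exp z - c) + FF' z * Real.exp z)) z := by
      exact ((hFder z).mul (Real.hasDerivAt_exp z)).sub
        ((hF'der z).mul ((Real.hasDerivAt_exp z).sub_const c))
    have hdiv := hNder.div (hWder z) (ne_of_gt hWz)
    refine hdiv.congr_deriv (Eq.symm ?_)
    rw [hΨ z, hFeq, hODE z, hA₀, Real.exp_neg]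
    field_simp
    ring
  have hFFcont : Continuous FF := by
    apply continuous_iff_continuousAt.2
    intro x
    exact (hFder x).continuousAt
  have hΨfun : Ψ = fun x => c₀ * FF x * Real.exp (-b * (x - θ)^2) := funext hΨeq
  have hΨcont : Continuous Ψ := by
    rw [hΨfun]
    exact (continuous_const.mul hFFcont).mul (Real.continuous_exp.comp
      (continuous_const.mul ((continuous_id.sub continuous_const).pow 2)))
  have hgint : ∀ (c : ℝ) (z : ℝ), IntegrableOn
      (fun s => Ψ s * Real.exp s * (A₀ - μ * s + r * c * Real.exp (-s))) (Iic z) := by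
    intro c z
    have hmeas : AEStronglyMeasurable
        (fun s => Ψ s * Real.exp s * (A₀ - μ * s + r * c * Real.exp (-s)))
        (volume.restrict (Iic z)) := by
      apply Continuous.aestronglyMeasurable
      exact (hΨcont.mul Real.continuous_exp).mul
        ((continuous_const.sub (continuous_const.mul continuous_id)).add
          (continuous_const.mul (Real.continuous_exp.comp continuous_neg)))
    have hbnd : Integrable (fun s => c₀ * FF z *
        (|A₀| * (Real.exp (1*s) * Real.exp (-b*(s-θ)^2))
          + μ * (Real.exp (2*s) * Real.exp (-b*(s-θ)^2))
          + (μ + |r*c|) * (Real.exp (0*s) * Real.exp (-b*(s-θ)^2)))) := by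
      apply Integrable.const_mul
      exact (((int_exp_gauss hbpos θ 1).const_mul _).add
        ((int_exp_gauss hbpos θ 2).const_mul _)).add ((int_exp_gauss hbpos θ 0).const_mul _)
    apply Integrable.mono' hbnd.integrableOn hmeas
    filter_upwards [ae_restrict_mem measurableSet_Iic] with s hs
    have hsz : s ≤ z := hs
    have hE : (0:ℝ) < Real.exp (-b*(s-θ)^2) := Real.exp_pos _
    have h1 : Ψ s ≤ c₀ * FF z * Real.exp (-b*(s-θ)^2) := by
      rw [hΨeq s]
      have hFs : FF s ≤ FF z := hFmono hsz
      exact mul_le_mul_of_nonneg_right (mul_le_mul_of_nonneg_left hFs hc₀.le) hE.le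
    have hpb := abs_poly_exp_bound A₀ μ (r*c) s hμ.le
    have hnorm : ‖Ψ s * Real.exp s * (A₀ - μ * s + r * c * Real.exp (-s))‖
        = Ψ s * (|A₀ - μ * s + r * c * Real.exp (-s)| * Real.exp s) := by
      rw [Real.norm_eq_abs, abs_mul, abs_mul, abs_of_pos (hΨpos s),
        abs_of_pos (Real.exp_pos s)]
      ring
    rw [hnorm]
    calc Ψ s * (|A₀ - μ * s + r * c * Real.exp (-s)| * Real.exp s)
        ≤ (c₀ * FF z * Real.exp (-b*(s-θ)^2))
            * (|A₀| *Real.exp s + μ*Real.exp (2*s) + (μ + |r*c|)) := by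
          exact mul_le_mul h1 hpb (mul_nonneg (abs_nonneg _) (Real.exp_pos s).le)
            (mul_nonneg (mul_nonneg hc₀.le (hFpos z).le) (Real.exp_pos _).le)
      _ = c₀ * FF z *
        (|A₀| * (Real.exp (1*s) * Real.exp (-b*(s-θ)^2))
          + μ * (Real.exp (2*s) * Real.exp (-b*(s-θ)^2))
          + (μ + |r*c|) * (Real.exp (0*s) * Real.exp (-b*(s-θ)^2))) := by
          rw [one_mul, zero_mul, Real.exp_zero]
          ring
  have hRtend : ∀ c : ℝ, Tendsto (R c) atBot (𝓝 0) := by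
    intro c
    set C : ℝ := FF 0 + FF' 0 * (1 + |c|) with hCdef
    have hCb : ∀ z ≤ (0:ℝ), ‖R c z‖ ≤ C / W θ * Real.exp (-b*(z-θ)^2) := by
      intro z hz
      have hWz := hWpos z
      have hnum : |FF z * Real.exp z - FF' z * (Real.exp z - c)| ≤ C := by
        have e1 : Real.exp z ≤ 1 := Real.exp_le_one_iff.2 hz
        have e2 : 0 < Real.exp z := Real.exp_pos z
        have m1 : FF z ≤ FF 0 := hFmono hz
        have m2 : FF' z ≤ FF' 0 := hF'mono hz
        have habs : |FF z * Real.exp z - FF' z * (Real.exp z - c)|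
            ≤ |FF z * Real.exp z| + |FF' z * (Real.exp z - c)| :=
          abs_sub_le_abs_add_abs _ _
        have ha1 : |FF z * Real.exp z| = FF z * Real.exp z := by
          rw [abs_of_pos (mul_pos (hFpos z) e2)]
        have ha2 : |FF' z * (Real.exp z - c)| ≤ FF' z * (Real.exp z + |c|) := by
          rw [abs_mul, abs_of_pos (hF'pos z)]
          apply mul_le_mul_of_nonneg_left _ (hF'pos z).le
          exact (abs_sub_le_abs_add_abs _ _).trans (by rw [abs_of_pos e2])
        have hc' : 0 ≤ |c| := abs_nonneg c
        have k1 : FF z * Real.exp z ≤ FF 0 := by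
          have := mul_le_mul m1 e1 e2.le (hFpos 0).le
          simpa using this
        have k2 : FF' z * (Real.exp z + |c|) ≤ FF' 0 * (1 + |c|) :=
          mul_le_mul m2 (by linarith) (by positivity) (hF'pos 0).le
        rw [hCdef]
        linarith [habs]
      show ‖(FF z * Real.exp z - FF' z * (Real.exp z - c)) / W z‖ ≤ _
      rw [Real.norm_eq_abs, abs_div, abs_of_pos hWz, hWform z]
      have heq : C / W θ * Real.exp (-b*(z-θ)^2)
          = C / (W θ * Real.exp (b*(z-θ)^2)) := by
        rw [neg_mul, Real.exp_neg]
        field_simp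
      rw [heq]
      exact (div_le_div_iff_of_pos_right (mul_pos hWθ (Real.exp_pos _))).2 hnum
    have hsq : Tendsto (fun z : ℝ => (z-θ)^2) atBot atTop := by
      have h1 : Tendsto (fun z : ℝ => z - θ) atBot atBot := by
        simpa [sub_eq_add_neg] using tendsto_atBot_add_const_right atBot (-θ) tendsto_id
      have h2 := (tendsto_pow_atTop (n := 2) (by norm_num)).comp
        (tendsto_abs_atBot_atTop.comp h1)
      refine h2.congr (fun z => ?_)
      simp [sq_abs]
    have htend0 : Tendsto (fun z : ℝ => C / W θ * Real.exp (-b*(z-θ)^2)) atBot (𝓝 0) := by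
      rw [show (0:ℝ) = C / W θ * 0 by ring]
      apply Tendsto.const_mul
      apply Real.tendsto_exp_atBot.comp
      exact Tendsto.const_mul_atTop_of_neg (by linarith [hbpos] : -b < 0) hsq
    apply squeeze_zero_norm' _ htend0
    filter_upwards [Iic_mem_atBot 0] with z hz
    exact hCb z hz
  have key : ∀ (c : ℝ) (z : ℝ),
      (∫ s in Iic z, Ψ s * Real.exp s * (A₀ - μ * s + r * c * Real.exp (-s))) = R c z := by
    intro c z
    have := integral_Iic_of_hasDerivAt_of_tendsto'
      (fun x _ => hRderiv c x) (hgint c z) (hRtend c)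
    rw [this, sub_zero]
  -- identify with f_s and f_b
  have hfs' : ∀ s, f_s s = A₀ - μ * s + r * c_s * Real.exp (-s) := by
    intro s; rw [hfs s]
  have hfb' : ∀ s, f_b s = A₀ - μ * s + r * (-c_b) * Real.exp (-s) := by
    intro s; rw [hfb s]; ring
  have hQint : ∀ z, (∫ s in Iic z, Ψ s * Real.exp s * f_s s) = R c_s z := by
    intro z
    rw [← key c_s z]
    congr 1
    funext s
    rw [hfs' s]
  have hPint : ∀ x, (∫ s in Iic x, Ψ s * Real.exp s * f_b s) = R (-c_b) x := by
    intro x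
    rw [← key (-c_b) x]
    congr 1
    funext s
    rw [hfb' s]
  have hq : ∀ x z, q_F x z = R (-c_b) x - R c_s z := by
    intro x z
    rw [hqF x z, hQint z, hPint x]
  -- elementary facts about f_s and f_b
  have hfsfun : f_s = fun x => A₀ - μ*x + r*c_s*Real.exp (-x) := funext hfs
  have hfbfun : f_b = fun x => A₀ - μ*x - r*c_b*Real.exp (-x) := funext hfb
  have hexpder : ∀ x : ℝ, HasDerivAt (fun y : ℝ => Real.exp (-y)) (-Real.exp (-x)) x := by
    intro x
    simpa [Function.comp_def] using (Real.hasDerivAt_exp (-x)).comp x (hasDerivAt_neg x)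
  have hfsder : ∀ x, HasDerivAt f_s (-μ - r*c_s*Real.exp (-x)) x := by
    intro x
    rw [hfsfun]
    have h := ((hasDerivAt_const x A₀).sub ((hasDerivAt_id x).const_mul μ)).add
      ((hexpder x).const_mul (r*c_s))
    refine h.congr_deriv (Eq.symm ?_)
    ring
  have hfbder : ∀ x, HasDerivAt f_b (-μ + r*c_b*Real.exp (-x)) x := by
    intro x
    rw [hfbfun]
    have h := ((hasDerivAt_const x A₀).sub ((hasDerivAt_id x).const_mul μ)).sub
      ((hexpder x).const_mul (r*c_b))
    refine h.congr_deriv (Eq.symm ?_)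
    ring
  have hfs_anti : StrictAnti f_s := by
    apply strictAnti_of_deriv_neg
    intro x
    rw [(hfsder x).deriv]
    nlinarith [mul_pos (mul_pos hr hcs) (Real.exp_pos (-x))]
  have hfs_pos : ∀ s, s < x_s → 0 < f_s s := by
    intro s h
    have := hfs_anti h
    rwa [hxs] at this
  have hfs_neg : ∀ s, x_s < s → f_s s < 0 := by
    intro s h
    have := hfs_anti h
    rwa [hxs] at this
  have hfs_nonneg : ∀ s, s ≤ x_s → 0 ≤ f_s s := by
    intro s h
    rcases eq_or_lt_of_le h with rfl | h
    · rw [hxs]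
    · exact (hfs_pos s h).le
  -- f_b is positive strictly between its roots
  have hfb_conc : StrictConcaveOn ℝ univ f_b := by
    apply strictConcaveOn_of_deriv2_neg convex_univ
      (Continuous.continuousOn (by
        rw [hfbfun]
        exact (continuous_const.sub (continuous_const.mul continuous_id)).sub
          (continuous_const.mul (Real.continuous_exp.comp continuous_neg))))
    intro x _
    have hd1 : deriv f_b = fun y => -μ + r*c_b*Real.exp (-y) := funext fun y => (hfbder y).deriv
    have hd2 : HasDerivAt (fun y => -μ + r*c_b*Real.exp (-y)) (-(r*c_b*Real.exp (-x))) x := by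
      have h := (hasDerivAt_const x (-μ)).add (((hexpder x)).const_mul (r*c_b))
      refine h.congr_deriv (Eq.symm ?_)
      ring
    show deriv (deriv f_b) x < 0
    rw [hd1, hd2.deriv]
    nlinarith [mul_pos (mul_pos hr hcb) (Real.exp_pos (-x))]
  have hfb_pos : ∀ x ∈ Ioo xb1 xb2, 0 < f_b x := by
    intro x hx
    set d : ℝ := xb2 - xb1 with hd
    have hd0 : 0 < d := by simp [hd]; linarith
    have hA : (0:ℝ) < (xb2 - x)/d := div_pos (by linarith [hx.2]) hd0
    have hB : (0:ℝ) < (x - xb1)/d := div_pos (by linarith [hx.1]) hd0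
    have hAB : (xb2 - x)/d + (x - xb1)/d = 1 := by field_simp; linarith
    have h := hfb_conc.2 (mem_univ xb1) (mem_univ xb2) (ne_of_lt hlt) hA hB hAB
    rw [hroot1, hroot2] at h
    have hpt : ((xb2 - x)/d) • xb1 + ((x - xb1)/d) • xb2 = x := by
      simp only [smul_eq_mul]
      field_simp
      ring
    rw [hpt] at h
    simpa using h
  -- x_s lies strictly above xb2
  have hxb2_lt : xb2 < x_s := by
    by_contra hcon
    push_neg at hcon
    have h1 : 0 < f_s xb2 := by
      have h2 : f_b xb2 = A₀ - μ*xb2 - r*c_b*Real.exp (-xb2) := hfb xb2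
      rw [hroot2] at h2
      rw [hfs xb2]
      nlinarith [Real.exp_pos (-xb2), mul_pos (mul_pos hr hcb) (Real.exp_pos (-xb2)),
        mul_pos (mul_pos hr hcs) (Real.exp_pos (-xb2))]
    have h3 : f_s xb2 ≤ f_s x_s := hfs_anti.antitone hcon
    rw [hxs] at h3
    linarith
  -- derivatives and continuity of the Q and P functions
  have hQderiv : ∀ z, HasDerivAt (R c_s) (Ψ z * Real.exp z * f_s z) z := by
    intro z
    have h := hRderiv c_s z
    rwa [← hfs' z] at h
  have hPderiv : ∀ x, HasDerivAt (R (-c_b)) (Ψ x * Real.exp x * f_b x) x := by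
    intro x
    have h := hRderiv (-c_b) x
    rwa [← hfb' x] at h
  have hQcont : Continuous (R c_s) :=
    continuous_iff_continuousAt.2 fun z => (hQderiv z).differentiableAt.continuousAt
  have hPcont : Continuous (R (-c_b)) :=
    continuous_iff_continuousAt.2 fun z => (hPderiv z).differentiableAt.continuousAt
  -- Q is strictly decreasing on [x_s, ∞) and strictly increasing on (-∞, x_s]
  have hQanti : StrictAntiOn (R c_s) (Ici x_s) := by
    apply strictAntiOn_of_deriv_neg (convex_Ici x_s) hQcont.continuousOn
    intro z hz
    rw [interior_Ici] at hz
    rw [(hQderiv z).deriv]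
    exact mul_neg_of_pos_of_neg (mul_pos (hΨpos z) (Real.exp_pos z)) (hfs_neg z hz)
  have hQmono : StrictMonoOn (R c_s) (Iic x_s) := by
    apply strictMonoOn_of_deriv_pos (convex_Iic x_s) hQcont.continuousOn
    intro z hz
    rw [interior_Iic] at hz
    rw [(hQderiv z).deriv]
    exact mul_pos (mul_pos (hΨpos z) (Real.exp_pos z)) (hfs_pos z hz)
  -- Q is positive on (-∞, x_s]
  have hfsint : ∀ z : ℝ, IntegrableOn (fun s => Ψ s * Real.exp s * f_s s) (Iic z) := by
    intro z
    have heq : (fun s => Ψ s * Real.exp s * f_s s)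
        = fun s => Ψ s * Real.exp s * (A₀ - μ * s + r * c_s * Real.exp (-s)) :=
      funext fun s => by rw [hfs' s]
    rw [heq]
    exact hgint c_s z
  have hQpos : ∀ z, z ≤ x_s → 0 < R c_s z := by
    intro z hz
    rw [← hQint z]
    have hnn : 0 ≤ᵐ[volume.restrict (Iic z)] fun s => Ψ s * Real.exp s * f_s s := by
      filter_upwards [ae_restrict_mem measurableSet_Iic] with s hs
      exact mul_nonneg (mul_nonneg (hΨpos s).le (Real.exp_pos s).le)
        (hfs_nonneg s (le_trans hs hz))
    apply (setIntegral_pos_iff_support_of_nonneg_ae hnn (hfsint z)).2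
    apply lt_of_lt_of_le _ (measure_mono (show Iio z ⊆
      Function.support (fun s => Ψ s * Real.exp s * f_s s) ∩ Iic z from ?_))
    · simp
    · intro s hs
      have hs' : s < z := hs
      refine ⟨ne_of_gt (mul_pos (mul_pos (hΨpos s) (Real.exp_pos s))
        (hfs_pos s (lt_of_lt_of_le hs' hz))), hs'.le⟩
  -- values at bstar and astar
  have hb' : Real.exp bstar * FF bstar = (Real.exp bstar - c_s) * FF' bstar := by
    rwa [hdF, hFeq] at hb
  have hQbstar : R c_s bstar = 0 := by
    show (FF bstar * Real.exp bstar - FF' bstar * (Real.exp bstar - c_s)) / W bstar = 0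
    rw [div_eq_zero_iff]
    left
    linarith [hb']
  have hbstar_gt : x_s < bstar := by
    by_contra hcon
    push_neg at hcon
    have := hQpos bstar hcon
    rw [hQbstar] at this
    exact lt_irrefl 0 this
  have hastar' : FF astar * Real.exp astar = FF' astar * (Real.exp astar + c_b) := by
    rwa [hdF, hFeq] at hastar_eq
  have hPastar : R (-c_b) astar = 0 := by
    show (FF astar * Real.exp astar - FF' astar * (Real.exp astar - -c_b)) / W astar = 0
    rw [div_eq_zero_iff]
    left
    rw [sub_neg_eq_add]
    linarith [hastar']
  -- P strictly increasing on [astar, xb2]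
  have hPmono : StrictMonoOn (R (-c_b)) (Icc astar xb2) := by
    apply strictMonoOn_of_deriv_pos (convex_Icc astar xb2) hPcont.continuousOn
    intro x hx
    rw [interior_Icc] at hx
    rw [(hPderiv x).deriv]
    have hxio : x ∈ Ioo xb1 xb2 := ⟨lt_trans hastar.1 hx.1, hx.2⟩
    exact mul_pos (mul_pos (hΨpos x) (Real.exp_pos x)) (hfb_pos x hxio)
  have hPnonneg : ∀ x ∈ Ico astar xb2, 0 ≤ R (-c_b) x := by
    intro x hx
    rcases eq_or_lt_of_le hx.1 with rfl | h
    · rw [hPastar]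
    · rw [← hPastar]
      exact (hPmono ⟨le_rfl, hastar.2.le⟩ ⟨hx.1, hx.2.le⟩ h).le
  -- P x < Q x pointwise
  have hPQ : ∀ x, R (-c_b) x < R c_s x := by
    intro x
    have hWx := hWpos x
    have hdiff : R (-c_b) x - R c_s x = -(FF' x * (c_b + c_s)) / W x := by
      show (FF x * Real.exp x - FF' x * (Real.exp x - -c_b)) / W x
        - (FF x * Real.exp x - FF' x * (Real.exp x - c_s)) / W x = _
      rw [div_sub_div_same]
      congr 1
      ring
    have hneg : -(FF' x * (c_b + c_s)) / W x < 0 := by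
      apply div_neg_of_neg_of_pos _ hWx
      nlinarith [hF'pos x]
    linarith [hdiff, hneg]
  -- existence of the crossing point
  have hex : ∀ x ∈ Ico astar xb2, ∃ z, x_s < z ∧ R c_s z = R (-c_b) x := by
    intro x hx
    have hP0 : 0 ≤ R (-c_b) x := hPnonneg x hx
    have hPlt : R (-c_b) x < R c_s x_s := by
      have h1 : R (-c_b) x < R c_s x := hPQ x
      have h2 : R c_s x ≤ R c_s x_s := by
        have hxle : x < x_s := lt_trans hx.2 hxb2_lt
        exact (hQmono (mem_Iic.2 hxle.le) (mem_Iic.2 le_rfl) hxle).le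
      linarith
    have hQb1 : R c_s (bstar + 1) < 0 := by
      rw [← hQbstar]
      exact hQanti (mem_Ici.2 hbstar_gt.le) (mem_Ici.2 (by linarith)) (by linarith)
    have hmem : R (-c_b) x ∈ Ico (R c_s (bstar+1)) (R c_s x_s) := ⟨by linarith, hPlt⟩
    have hsub := intermediate_value_Ioc' (by linarith : x_s ≤ bstar + 1)
      hQcont.continuousOn hmem
    obtain ⟨z, hz, hQz⟩ := hsub
    exact ⟨z, hz.1, hQz⟩
  have huniq : ∀ z₁ z₂, x_s < z₁ → x_s < z₂ → R c_s z₁ = R c_s z₂ → z₁ = z₂ := by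
    intro z₁ z₂ h1 h2 heq
    exact hQanti.injOn (mem_Ici.2 h1.le) (mem_Ici.2 h2.le) heq
  -- construct β
  have hex' : ∀ x : ℝ, ∃ z, x ∈ Ico astar xb2 → x_s < z ∧ R c_s z = R (-c_b) x := by
    intro x
    by_cases hx : x ∈ Ico astar xb2
    · obtain ⟨z, h1, h2⟩ := hex x hx
      exact ⟨z, fun _ => ⟨h1, h2⟩⟩
    · exact ⟨0, fun hc => absurd hc hx⟩
  choose β hβ using hex'
  refine ⟨β, ?_, ?_, ?_⟩
  · intro x hx
    obtain ⟨hz1, hz2⟩ := hβ x hx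
    refine ⟨hz1, ?_, ?_⟩
    · rw [hq x (β x), hz2]
      ring
    · intro z hzx hqz
      rw [hq x z] at hqz
      apply huniq z (β x) hzx hz1
      rw [hz2]
      linarith
  · intro x1 hx1 x2 hx2 h12
    obtain ⟨ha1, ha2⟩ := hβ x1 hx1
    obtain ⟨hb1, hb2⟩ := hβ x2 hx2
    have hPlt : R (-c_b) x1 < R (-c_b) x2 :=
      hPmono ⟨hx1.1, hx1.2.le⟩ ⟨hx2.1, hx2.2.le⟩ h12
    by_contra hcon
    push_neg at hcon
    rcases eq_or_lt_of_le hcon with heq | hlt2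
    · rw [heq] at ha2
      rw [ha2] at hb2
      linarith
    · have := hQanti (mem_Ici.2 ha1.le) (mem_Ici.2 hb1.le) hlt2
      rw [ha2, hb2] at this
      linarith
  · have hmem : astar ∈ Ico astar xb2 := ⟨le_rfl, hastar.2⟩
    obtain ⟨hz1, hz2⟩ := hβ astar hmem
    apply huniq (β astar) bstar hz1 hbstar_gt
    rw [hz2, hPastar, hQbstar]
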